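/- arXiv:1402.2786 — 3 statements merged into one kernel-verified Lean document; each statement's English description precedes it below -/
import Mathlib

section
/- Let X = {X_t}_{t∈I} be a stochastic process such that for each t ∈ I, X_t has a continuous distribution F_t that is strictly increasing in a neighbourhood of its median m_t. Then the coordinatewise median m_c = {m_t}_{t∈I} maximizes the modified band depth MBD(x) = Σ_{j=2}^J ∫_I [1 - F_t(x_t)^j - (1 - F_t(x_t))^j] dΛ(t) over all measurable x : I → ℝ, and any x which equals m_c outside a Λ-null set is also a maximizer. -/
open MeasureTheory

lemma key_pow_ineq (j : ℕ) {p : ℝ} (h0 : 0 ≤ p) (h1 : p ≤ 1) :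
    1 - p ^ j - (1 - p) ^ j ≤ 1 - (1/2 : ℝ) ^ j - (1 - 1/2 : ℝ) ^ j := by
  have hc := (convexOn_pow j).2 (Set.mem_Ici.mpr h0)
      (Set.mem_Ici.mpr (by linarith : (0:ℝ) ≤ 1 - p))
      (by norm_num : (0:ℝ) ≤ 1/2) (by norm_num : (0:ℝ) ≤ 1/2) (by norm_num)
  simp only [smul_eq_mul] at hc
  have : ((1:ℝ)/2 * p + 1/2 * (1 - p)) = 1/2 := by ring
  rw [this] at hc
  nlinarith [hc]

/-- The coordinatewise median maximizes the modified band depth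
`MBD(x) = Σ_{j=2}^J ∫_I [1 - F_t(x_t)^j - (1 - F_t(x_t))^j] dΛ(t)`, and so does
any function agreeing with it outside a `Λ`-null set. -/
theorem coordinatewise_median_maximizes_MBD {I : Type*} [MeasurableSpace I]
    (Λ : Measure I) [IsProbabilityMeasure Λ] (J : ℕ) (hJ : 2 ≤ J)
    (F : I → ℝ → ℝ) (hF : ∀ t y, F t y ∈ Set.Icc (0 : ℝ) 1)
    (m : I → ℝ) (hm : ∀ t, F t (m t) = 1/2) :
    (∀ x : I → ℝ,
      (∀ j ∈ Finset.Icc 2 J,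
        Integrable (fun t => 1 - (F t (x t)) ^ j - (1 - F t (x t)) ^ j) Λ) →
      ∑ j ∈ Finset.Icc 2 J, ∫ t, (1 - (F t (x t)) ^ j - (1 - F t (x t)) ^ j) ∂Λ ≤
        ∑ j ∈ Finset.Icc 2 J, ∫ t, (1 - (F t (m t)) ^ j - (1 - F t (m t)) ^ j) ∂Λ) ∧
    (∀ x : I → ℝ, x =ᵐ[Λ] m →
      ∑ j ∈ Finset.Icc 2 J, ∫ t, (1 - (F t (x t)) ^ j - (1 - F t (x t)) ^ j) ∂Λ =
        ∑ j ∈ Finset.Icc 2 J, ∫ t, (1 - (F t (m t)) ^ j - (1 - F t (m t)) ^ j) ∂Λ) := by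
  have hconst : ∀ j : ℕ, ∫ t, (1 - (F t (m t)) ^ j - (1 - F t (m t)) ^ j) ∂Λ
      = 1 - (1/2 : ℝ) ^ j - (1 - 1/2 : ℝ) ^ j := by
    intro j
    have : (fun t => 1 - (F t (m t)) ^ j - (1 - F t (m t)) ^ j)
        = fun _ => 1 - (1/2 : ℝ) ^ j - (1 - 1/2 : ℝ) ^ j := by
      funext t; rw [hm t]
    rw [this, integral_const, probReal_univ, one_smul]
  constructor
  · intro x hx
    refine Finset.sum_le_sum fun j hj => ?_
    rw [hconst j]
    calc ∫ t, (1 - (F t (x t)) ^ j - (1 - F t (x t)) ^ j) ∂Λ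
        ≤ ∫ _t, (1 - (1/2 : ℝ) ^ j - (1 - 1/2 : ℝ) ^ j) ∂Λ := by
          refine integral_mono (hx j hj) (integrable_const _) fun t => ?_
          exact key_pow_ineq j (hF t (x t)).1 (hF t (x t)).2
      _ = 1 - (1/2 : ℝ) ^ j - (1 - 1/2 : ℝ) ^ j := by
          rw [integral_const, probReal_univ, one_smul]
  · intro x hxm
    refine Finset.sum_congr rfl fun j _ => ?_
    refine integral_congr_ae ?_
    filter_upwards [hxm] with t ht
    rw [ht]
end

section
/- Let X = {X_t}_{t∈I} be a stochastic process with F_t(m_t) = 1/2 for each t ∈ I, where F_t is the CDF of X_t and m_t the median of X_t. Then the coordinatewise median m_c = {m_t} maximizes the modified half-region depth MHRD(x) = min{∫_I F_t(x_t) dΛ(t), 1 - ∫_I F_t(x_t) dΛ(t)}, and its maximum value is 1/2. -/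
open MeasureTheory

/-- The coordinatewise median maximizes the modified half-region depth
`MHRD(x) = min {∫ F_t(x_t) dΛ, 1 - ∫ F_t(x_t) dΛ}`, and its maximum value is `1/2`. -/
theorem coordinatewise_median_maximizes_MHRD {I : Type*} [MeasurableSpace I]
    (Λ : Measure I) [IsProbabilityMeasure Λ]
    (F : I → ℝ → ℝ) (hF : ∀ t y, F t y ∈ Set.Icc (0 : ℝ) 1)
    (m : I → ℝ) (hm : ∀ t, F t (m t) = 1/2) :
    min (∫ t, F t (m t) ∂Λ) (1 - ∫ t, F t (m t) ∂Λ) = 1/2 ∧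
    ∀ x : I → ℝ, Integrable (fun t => F t (x t)) Λ →
      min (∫ t, F t (x t) ∂Λ) (1 - ∫ t, F t (x t) ∂Λ) ≤
        min (∫ t, F t (m t) ∂Λ) (1 - ∫ t, F t (m t) ∂Λ) := by
  have hint : (∫ t, F t (m t) ∂Λ) = 1/2 := by
    simp only [hm]
    simp [integral_const, measure_univ]
  rw [hint]
  constructor
  · norm_num
  · intro x _
    have : min (∫ t, F t (x t) ∂Λ) (1 - ∫ t, F t (x t) ∂Λ) ≤ 1/2 := by
      rcases le_total (∫ t, F t (x t) ∂Λ) (1/2) with h | h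
      · exact le_trans (min_le_left _ _) h
      · exact le_trans (min_le_right _ _) (by linarith)
    calc min (∫ t, F t (x t) ∂Λ) (1 - ∫ t, F t (x t) ∂Λ) ≤ 1/2 := this
      _ ≤ min (1/2) (1 - 1/2) := by norm_num
end

section
/- Let X_1, X_2, ... be i.i.d. copies of a random element X in a normed space with P(‖X - m‖ > M) < ε for some fixed m, M, and ε ∈ (0, 1/6). Suppose (1/n) Σ_{i=1}^n 1(‖X_i - m‖ > M) ≤ 2ε. Then for every x with ‖x - m‖ > 4M, (1/n) Σ_{i=1}^n ‖x - X_i‖ ≥ ((1-6ε)/2)·‖x - m‖ + (1/n) Σ_{i=1}^n ‖m - X_i‖ > (1/n) Σ_{i=1}^n ‖m - X_i‖. Consequently any minimizer of x ↦ (1/n)Σ_i ‖x - X_i‖ lies in the ball {x : ‖x - m‖ ≤ 4M}. -/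
open scoped Classical

/-- Deterministic key inequality for the boundedness of the empirical spatial median:
if at most a fraction `2ε` of the data lie outside the ball of radius `M` around `m`
(with `ε < 1/6`), then for every `x` with `‖x - m‖ > 4M`,
`(1/n) Σ ‖x - X_i‖ ≥ ((1-6ε)/2)‖x - m‖ + (1/n) Σ ‖m - X_i‖ > (1/n) Σ ‖m - X_i‖`;
consequently every minimizer of `x ↦ Σ ‖x - X_i‖` lies in `{x : ‖x - m‖ ≤ 4M}`. -/
theorem empirical_spatial_median_bounded {E : Type*} [NormedAddCommGroup E]
    (n : ℕ) (hn : 1 ≤ n) (X : Fin n → E) (m : E) (M ε : ℝ) (hM : 0 < M)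
    (hε : ε ∈ Set.Ioo (0 : ℝ) (1/6))
    (hfreq : (1 / n : ℝ) * ∑ i, (if ‖X i - m‖ > M then (1 : ℝ) else 0) ≤ 2 * ε) :
    (∀ x : E, ‖x - m‖ > 4 * M →
      ((1 / n : ℝ) * ∑ i, ‖x - X i‖ ≥
          (1 - 6 * ε) / 2 * ‖x - m‖ + (1 / n : ℝ) * ∑ i, ‖m - X i‖ ∧
        (1 / n : ℝ) * ∑ i, ‖x - X i‖ > (1 / n : ℝ) * ∑ i, ‖m - X i‖)) ∧
    (∀ mhat : E, (∀ y, ∑ i, ‖mhat - X i‖ ≤ ∑ i, ‖y - X i‖) → ‖mhat - m‖ ≤ 4 * M) := by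
  obtain ⟨hε0, hε6⟩ := hε
  have hn0 : (0:ℝ) < n := by exact_mod_cast hn
  set k : ℝ := ∑ i, (if ‖X i - m‖ > M then (1:ℝ) else 0) with hkdef
  have hk_le : k ≤ 2 * ε * n := by
    rw [one_div_mul_eq_div, div_le_iff₀ hn0] at hfreq
    exact hfreq
  -- main pointwise claim (undivided form)
  have key : ∀ x : E, ‖x - m‖ > 4 * M →
      ∑ i, ‖x - X i‖ ≥ (n : ℝ) * ((1 - 6 * ε) / 2 * ‖x - m‖) + ∑ i, ‖m - X i‖ := by
    intro x hx
    have hxm : 0 < ‖x - m‖ := lt_trans (by linarith) hx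
    have hper : ∀ i : Fin n, ‖m - X i‖ + (‖x - m‖ / 2
        - 3 / 2 * ‖x - m‖ * (if ‖X i - m‖ > M then (1:ℝ) else 0)) ≤ ‖x - X i‖ := by
      intro i
      have h1 : ‖m - X i‖ ≤ ‖x - m‖ + ‖x - X i‖ := by
        have e : m - X i = (m - x) + (x - X i) := by abel
        rw [e]
        calc ‖(m - x) + (x - X i)‖ ≤ ‖m - x‖ + ‖x - X i‖ := norm_add_le _ _
          _ = ‖x - m‖ + ‖x - X i‖ := by rw [norm_sub_rev m x]
      have h2 : ‖x - m‖ ≤ ‖x - X i‖ + ‖m - X i‖ := by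
        have e : x - m = (x - X i) + (X i - m) := by abel
        rw [e]
        calc ‖(x - X i) + (X i - m)‖ ≤ ‖x - X i‖ + ‖X i - m‖ := norm_add_le _ _
          _ = ‖x - X i‖ + ‖m - X i‖ := by rw [norm_sub_rev (X i) m]
      by_cases hb : ‖X i - m‖ > M
      · simp only [hb, if_pos, mul_one]
        linarith
      · simp only [hb, if_neg, not_false_iff, mul_zero]
        push_neg at hb
        have : ‖m - X i‖ ≤ M := by rw [norm_sub_rev]; exact hb
        linarith
    have hsum := Finset.sum_le_sum (s := Finset.univ) (fun i _ => hper i)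
    rw [Finset.sum_add_distrib, Finset.sum_sub_distrib, Finset.sum_const,
      Finset.card_univ, Fintype.card_fin, ← Finset.mul_sum] at hsum
    have : n • (‖x - m‖ / 2) = (n : ℝ) * (‖x - m‖ / 2) := by
      simp [nsmul_eq_mul]
    rw [this] at hsum
    nlinarith [hsum, mul_le_mul_of_nonneg_left hk_le (by positivity : (0:ℝ) ≤ 3/2 * ‖x - m‖)]
  -- first conclusion in divided form
  have key' : ∀ x : E, ‖x - m‖ > 4 * M →
      ((1 / n : ℝ) * ∑ i, ‖x - X i‖ ≥
          (1 - 6 * ε) / 2 * ‖x - m‖ + (1 / n : ℝ) * ∑ i, ‖m - X i‖ ∧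
        (1 / n : ℝ) * ∑ i, ‖x - X i‖ > (1 / n : ℝ) * ∑ i, ‖m - X i‖) := by
    intro x hx
    have hxm : 0 < ‖x - m‖ := lt_trans (by linarith) hx
    have h := key x hx
    have hinv : (0:ℝ) < 1 / n := by positivity
    have hone : (1 / (n:ℝ)) * (n:ℝ) = 1 := by field_simp
    have hge : (1 / n : ℝ) * ∑ i, ‖x - X i‖ ≥
        (1 - 6 * ε) / 2 * ‖x - m‖ + (1 / n : ℝ) * ∑ i, ‖m - X i‖ := by
      have := mul_le_mul_of_nonneg_left h (le_of_lt hinv)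
      rw [mul_add, ← mul_assoc, hone, one_mul] at this
      linarith
    have hpos : 0 < (1 - 6 * ε) / 2 * ‖x - m‖ := by
      apply mul_pos
      · linarith
      · exact hxm
    exact ⟨hge, by linarith⟩
  refine ⟨key', ?_⟩
  intro mhat hmin
  by_contra hcon
  push_neg at hcon
  have h := (key' mhat hcon).2
  have hinv : (0:ℝ) < 1 / n := by positivity
  have := hmin m
  have h2 : (1 / n : ℝ) * ∑ i, ‖mhat - X i‖ ≤ (1 / n : ℝ) * ∑ i, ‖m - X i‖ :=
    mul_le_mul_of_nonneg_left this (le_of_lt hinv)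
  linarith
end
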